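/- For all real x, y, t and nonnegative integers i, j, the double integral ∫₀^∞∫₀^∞ x^{2i+1} y^{2j+1} H(t, x+y) dx dy equals ((2i+1)!(2j+1)!/(2i+2j+3)!) · F_{2i+2j+3}(t), where F_{2k+1}(t) = ∫₀^∞ x^{2k+1} H(x,t) dx. -/

import Mathlib

open Real MeasureTheory

/-- The kernel `H(x,y) = (1/(4π))(1/cosh((x−y)/4) − 1/cosh((x+y)/4))`. -/
noncomputable def Hker (x y : ℝ) : ℝ :=
  (1 / (4 * Real.pi)) *
    (1 / Real.cosh ((x - y) / 4) - 1 / Real.cosh ((x + y) / 4))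

lemma fact_prod_nat (a b : ℕ) :
    a.factorial * ∏ j ∈ Finset.range (b+1), (a+1+j) = (a+b+1).factorial := by
  induction b with
  | zero => simp [Nat.factorial_succ, mul_comm]
  | succ b ih =>
    rw [Finset.prod_range_succ, ← mul_assoc, ih,
      show a + (b+1) + 1 = (a + b + 1) + 1 from by ring]
    conv_rhs => rw [Nat.factorial_succ]
    ring

lemma beta_nat (a b : ℕ) {s : ℝ} (hs : 0 < s) :
    ∫ x in Set.Ioo (0:ℝ) s, x ^ a * (s - x) ^ b =
      (a.factorial : ℝ) * b.factorial / (a+b+1).factorial * s ^ (a+b+1) := by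
  have hu : 0 < Complex.re ((a:ℂ)+1) := by
    simp only [Complex.add_re, Complex.natCast_re, Complex.one_re]
    positivity
  have hβ : Complex.betaIntegral ((a:ℂ)+1) ((b:ℂ)+1) =
      ((a.factorial : ℂ) * b.factorial / (a+b+1).factorial) := by
    rw [Complex.betaIntegral_eval_nat_add_one_right hu b]
    have hprod : ((a.factorial : ℂ)) * ∏ j ∈ Finset.range (b+1), ((a:ℂ)+1+j)
        = ((a+b+1).factorial : ℂ) := by
      rw [show (∏ j ∈ Finset.range (b+1), ((a:ℂ)+1+j))
          = ((∏ j ∈ Finset.range (b+1), (a+1+j) : ℕ) : ℂ) by push_cast; ring_nf]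
      rw [← Nat.cast_mul, fact_prod_nat a b]
    have ha0 : (a.factorial : ℂ) ≠ 0 := by exact_mod_cast a.factorial_ne_zero
    have hp0 : (∏ j ∈ Finset.range (b+1), ((a:ℂ)+1+j)) ≠ 0 := by
      intro h
      rw [h, mul_zero] at hprod
      exact_mod_cast (a+b+1).factorial_ne_zero (by exact_mod_cast hprod.symm)
    field_simp
    rw [mul_assoc, mul_comm _ (a.factorial : ℂ), hprod]
    exact (mul_div_cancel_right₀ _ (by exact_mod_cast (a+b+1).factorial_ne_zero)).symm
  have h := Complex.betaIntegral_scaled ((a:ℂ)+1) ((b:ℂ)+1) hs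
  simp only [add_sub_cancel_right] at h
  have hexp : (a:ℂ)+1+((b:ℂ)+1)-1 = ((a+b+1 : ℕ) : ℂ) := by push_cast; ring
  rw [hexp, Complex.cpow_natCast, hβ] at h
  have hlhs : ∫ x in (0:ℝ)..s, ((x:ℂ)) ^ ((a:ℂ)) * ((s:ℂ) - x) ^ ((b:ℂ))
      = ((∫ x in (0:ℝ)..s, x ^ a * (s - x) ^ b : ℝ) : ℂ) := by
    rw [← intervalIntegral.integral_ofReal]
    refine intervalIntegral.integral_congr fun x _ => ?_
    rw [show ((a:ℂ)) = ((a : ℕ) : ℂ) by norm_num, show ((b:ℂ)) = ((b : ℕ) : ℂ) by norm_num,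
      Complex.cpow_natCast, Complex.cpow_natCast]
    push_cast; ring
  rw [hlhs] at h
  have : ((∫ x in (0:ℝ)..s, x ^ a * (s - x) ^ b : ℝ) : ℂ)
      = (((a.factorial : ℝ) * b.factorial / (a+b+1).factorial * s ^ (a+b+1) : ℝ) : ℂ) := by
    rw [h]; push_cast; ring
  have h2 := Complex.ofReal_injective this
  rw [← h2, intervalIntegral.integral_of_le hs.le, ← integral_Ioc_eq_integral_Ioo]

lemma one_div_cosh_le (u : ℝ) : 1 / Real.cosh u ≤ 2 * Real.exp (-|u|) := by
  have h1 : Real.exp |u| ≤ 2 * Real.cosh u := by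
    rw [Real.cosh_eq]
    rcases abs_cases u with ⟨h, _⟩ | ⟨h, _⟩
    · rw [h]; nlinarith [Real.exp_pos (-u)]
    · rw [h]; nlinarith [Real.exp_pos u]
  have h2 : 0 < Real.exp |u| := Real.exp_pos _
  rw [Real.exp_neg, div_le_iff₀ (Real.cosh_pos u)]
  have h3 := mul_le_mul_of_nonneg_left h1 (inv_nonneg.mpr h2.le)
  rw [inv_mul_cancel₀ h2.ne'] at h3
  nlinarith [h3]

lemma Hker_bound (t s : ℝ) (hs : 0 ≤ s) :
    |Hker t s| ≤ (Real.exp (|t| / 4) / Real.pi) * Real.exp (-s / 4) := by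
  have hπ : (0:ℝ) < Real.pi := Real.pi_pos
  have b1 : 1 / Real.cosh ((t - s) / 4) ≤ 2 * Real.exp ((|t| - s) / 4) := by
    refine (one_div_cosh_le _).trans ?_
    have hkey : -|(t - s)/4| ≤ (|t| - s)/4 := by
      rw [abs_div, abs_of_pos (by norm_num : (0:ℝ) < 4)]
      have : s - |t| ≤ |t - s| := by
        have := abs_sub_abs_le_abs_sub s t
        rw [abs_sub_comm] at this
        linarith [abs_of_nonneg hs]
      linarith
    have := Real.exp_le_exp.mpr hkey
    nlinarith [this]
  have b2 : 1 / Real.cosh ((t + s) / 4) ≤ 2 * Real.exp ((|t| - s) / 4) := by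
    refine (one_div_cosh_le _).trans ?_
    have hkey : -|(t + s)/4| ≤ (|t| - s)/4 := by
      rw [abs_div, abs_of_pos (by norm_num : (0:ℝ) < 4)]
      have : s - |t| ≤ |t + s| := by
        have h3 := abs_sub_abs_le_abs_sub s (-t)
        rw [abs_neg, sub_neg_eq_add, abs_of_nonneg hs, add_comm s t] at h3
        linarith
      linarith
    have := Real.exp_le_exp.mpr hkey
    nlinarith [this]
  have hc1 : 0 < Real.cosh ((t - s) / 4) := Real.cosh_pos _
  have hc2 : 0 < Real.cosh ((t + s) / 4) := Real.cosh_pos _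
  have habs : |1 / Real.cosh ((t - s) / 4) - 1 / Real.cosh ((t + s) / 4)|
      ≤ 4 * Real.exp ((|t| - s) / 4) := by
    rw [abs_sub_le_iff]
    constructor
    · have : (0:ℝ) ≤ 1 / Real.cosh ((t + s) / 4) := by positivity
      nlinarith [Real.exp_pos ((|t| - s)/4)]
    · have : (0:ℝ) ≤ 1 / Real.cosh ((t - s) / 4) := by positivity
      nlinarith [Real.exp_pos ((|t| - s)/4)]
  have : |Hker t s| = (1 / (4 * Real.pi)) *
      |1 / Real.cosh ((t - s) / 4) - 1 / Real.cosh ((t + s) / 4)| := by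
    rw [Hker, abs_mul, abs_of_pos (by positivity : (0:ℝ) < 1 / (4 * Real.pi))]
  rw [this]
  have hE : Real.exp ((|t| - s) / 4) = Real.exp (|t|/4) * Real.exp (-s/4) := by
    rw [← Real.exp_add]; ring_nf
  calc (1 / (4 * Real.pi)) * |1 / Real.cosh ((t - s) / 4) - 1 / Real.cosh ((t + s) / 4)|
      ≤ (1 / (4 * Real.pi)) * (4 * Real.exp ((|t| - s) / 4)) := by gcongr
    _ = (Real.exp (|t| / 4) / Real.pi) * Real.exp (-s / 4) := by
        rw [hE]; field_simp

lemma continuous_Hker_snd (t : ℝ) : Continuous (fun s => Hker t s) := by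
  unfold Hker
  have h1 : Continuous (fun s : ℝ => Real.cosh ((t - s) / 4)) := by continuity
  have h2 : Continuous (fun s : ℝ => Real.cosh ((t + s) / 4)) := by continuity
  exact continuous_const.mul
    ((continuous_const.div h1 (fun s => (Real.cosh_pos _).ne')).sub
     (continuous_const.div h2 (fun s => (Real.cosh_pos _).ne')))

lemma int_pow_exp (a : ℕ) :
    IntegrableOn (fun x : ℝ => x ^ a * Real.exp (-x/4)) (Set.Ioi 0) := by
  have h := integrableOn_rpow_mul_exp_neg_mul_rpow (p := 1) (s := (a:ℝ)) (b := 1/4)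
    (lt_of_lt_of_le (by norm_num) (Nat.cast_nonneg a)) (by norm_num) (by norm_num)
  refine h.congr_fun (fun x hx => ?_) measurableSet_Ioi
  beta_reduce
  rw [Real.rpow_natCast, Real.rpow_one]
  ring_nf

lemma int_pow_Hker (n : ℕ) (t : ℝ) :
    IntegrableOn (fun s => s ^ n * Hker t s) (Set.Ioi 0) := by
  set C := Real.exp (|t| / 4) / Real.pi with hC
  have hC0 : 0 ≤ C := by positivity
  refine Integrable.mono' (((int_pow_exp n).const_mul C).mono_measure le_rfl) ?_ ?_
  · exact ((continuous_pow n).mul (continuous_Hker_snd t)).aestronglyMeasurable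
  · filter_upwards [ae_restrict_mem measurableSet_Ioi] with s hs
    have hs' : (0:ℝ) < s := hs
    rw [Real.norm_eq_abs, abs_mul, abs_pow, abs_of_pos hs']
    calc s ^ n * |Hker t s| ≤ s ^ n * (C * Real.exp (-s/4)) := by
          gcongr
          exact Hker_bound t s hs'.le
      _ = C * (s ^ n * Real.exp (-s/4)) := by ring

theorem stmt1 (i j : ℕ) (t : ℝ) :
    (∫ x in Set.Ioi (0 : ℝ), ∫ y in Set.Ioi (0 : ℝ),
        x ^ (2 * i + 1) * y ^ (2 * j + 1) * Hker t (x + y)) =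
      ((Nat.factorial (2 * i + 1) : ℝ) * (Nat.factorial (2 * j + 1) : ℝ) /
          (Nat.factorial (2 * i + 2 * j + 3) : ℝ)) *
        ∫ x in Set.Ioi (0 : ℝ), x ^ (2 * i + 2 * j + 3) * Hker x t := by
  set a := 2 * i + 1 with ha
  set b := 2 * j + 1 with hb
  have hn : 2 * i + 2 * j + 3 = a + b + 1 := by omega
  set μ := volume.restrict (Set.Ioi (0:ℝ)) with hμ
  set C := Real.exp (|t| / 4) / Real.pi with hC
  have hC0 : 0 ≤ C := by positivity
  set F : ℝ × ℝ → ℝ := fun p => p.1 ^ a * p.2 ^ b * Hker t (p.1 + p.2) with hF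
  -- integrability of F on the product measure
  have hFcont : Continuous F := by
    apply Continuous.mul
    · exact ((continuous_fst.pow a).mul (continuous_snd.pow b))
    · exact (continuous_Hker_snd t).comp (continuous_fst.add continuous_snd)
  have hdom : Integrable
      (fun p : ℝ × ℝ => (C * (p.1 ^ a * Real.exp (-p.1/4))) * (p.2 ^ b * Real.exp (-p.2/4)))
      (μ.prod μ) :=
    Integrable.mul_prod ((int_pow_exp a).const_mul C) (int_pow_exp b)
  have hFint : Integrable F (μ.prod μ) := by
    refine hdom.mono' hFcont.aestronglyMeasurable ?_
    rw [hμ, Measure.prod_restrict]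
    filter_upwards [ae_restrict_mem (measurableSet_Ioi.prod measurableSet_Ioi)] with p hp
    obtain ⟨hp1, hp2⟩ := hp
    have hx : (0:ℝ) < p.1 := hp1
    have hy : (0:ℝ) < p.2 := hp2
    rw [hF]
    simp only [Real.norm_eq_abs]
    rw [abs_mul, abs_mul, abs_pow, abs_pow, abs_of_pos hx, abs_of_pos hy]
    have hb1 : |Hker t (p.1 + p.2)| ≤ C * Real.exp (-(p.1 + p.2)/4) :=
      Hker_bound t _ (by linarith)
    have hexp : Real.exp (-(p.1 + p.2)/4) = Real.exp (-p.1/4) * Real.exp (-p.2/4) := by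
      rw [← Real.exp_add]; ring_nf
    calc p.1 ^ a * p.2 ^ b * |Hker t (p.1 + p.2)|
        ≤ p.1 ^ a * p.2 ^ b * (C * Real.exp (-(p.1 + p.2)/4)) := by
          gcongr
      _ = C * (p.1 ^ a * Real.exp (-p.1/4)) * (p.2 ^ b * Real.exp (-p.2/4)) := by
          rw [hexp]; ring
  -- step 1 : iterated integral to product integral
  have step1 : (∫ x in Set.Ioi (0 : ℝ), ∫ y in Set.Ioi (0 : ℝ),
        x ^ a * y ^ b * Hker t (x + y)) = ∫ p, F p ∂(μ.prod μ) :=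
    integral_integral hFint
  -- shear equivalence
  let shear : (ℝ × ℝ) ≃ᵐ (ℝ × ℝ) :=
  { toEquiv :=
    { toFun := fun p => (p.1, p.2 + p.1)
      invFun := fun p => (p.1, p.2 - p.1)
      left_inv := fun p => by simp
      right_inv := fun p => by simp }
    measurable_toFun := measurable_fst.prodMk (measurable_snd.add measurable_fst)
    measurable_invFun := measurable_fst.prodMk (measurable_snd.sub measurable_fst) }
  have hshear : MeasurePreserving shear (volume : Measure (ℝ × ℝ)) volume := by
    rw [show (volume : Measure (ℝ × ℝ)) = Measure.prod volume volume from Measure.volume_eq_prod ℝ ℝ]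
    exact (MeasurePreserving.id volume).skew_product
      (measurable_snd.add measurable_fst)
      (Filter.Eventually.of_forall fun x => map_add_right_eq_self volume x)
  -- the sheared function
  set S : Set (ℝ × ℝ) := {p : ℝ × ℝ | 0 < p.1 ∧ p.1 < p.2} with hS
  have hSm : MeasurableSet S := by
    apply MeasurableSet.inter
    · exact measurableSet_lt measurable_const measurable_fst
    · exact measurableSet_lt measurable_fst measurable_snd
  set G : ℝ × ℝ → ℝ :=
    S.indicator (fun p => p.1 ^ a * (p.2 - p.1) ^ b * Hker t p.2) with hG
  have hGmeas : AEStronglyMeasurable G (volume : Measure (ℝ × ℝ)) := by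
    refine (StronglyMeasurable.indicator ?_ hSm).aestronglyMeasurable
    exact (((continuous_fst.pow a).mul ((continuous_snd.sub continuous_fst).pow b)).mul
      ((continuous_Hker_snd t).comp continuous_snd)).stronglyMeasurable
  have hcomp : G ∘ shear = (Set.Ioi (0:ℝ) ×ˢ Set.Ioi (0:ℝ)).indicator F := by
    funext p
    simp only [Function.comp_apply, hG]
    have hsp : shear p = (p.1, p.2 + p.1) := rfl
    rw [hsp]
    have heq : ((p.1, p.2 + p.1) ∈ S) ↔ (p ∈ Set.Ioi (0:ℝ) ×ˢ Set.Ioi (0:ℝ)) := by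
      simp only [hS, Set.mem_setOf_eq, Set.mem_prod, Set.mem_Ioi]
      constructor
      · rintro ⟨h1, h2⟩; exact ⟨h1, by linarith⟩
      · rintro ⟨h1, h2⟩; exact ⟨h1, by linarith⟩
    by_cases hmem : p ∈ Set.Ioi (0:ℝ) ×ˢ Set.Ioi (0:ℝ)
    · rw [Set.indicator_of_mem hmem, Set.indicator_of_mem (heq.mpr hmem)]
      simp only [hF, add_sub_cancel_right]
      ring_nf
    · rw [Set.indicator_of_notMem hmem, Set.indicator_of_notMem (fun h => hmem (heq.mp h))]
  -- step 2 : product integral over restricted measure = integral of G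
  have step2 : ∫ p, F p ∂(μ.prod μ) = ∫ p, G p := by
    rw [hμ, Measure.prod_restrict, ← integral_indicator (measurableSet_Ioi.prod measurableSet_Ioi)]
    rw [← hcomp]
    exact hshear.integral_comp' G
  -- integrability of G
  have hGint : Integrable G (volume : Measure (ℝ × ℝ)) := by
    rw [← hshear.integrable_comp hGmeas, hcomp]
    rw [integrable_indicator_iff (measurableSet_Ioi.prod measurableSet_Ioi)]
    rw [hμ, Measure.prod_restrict] at hFint
    exact hFint
  -- step 3 : Fubini in the other order
  set β : ℝ := (a.factorial : ℝ) * b.factorial / (a+b+1).factorial with hβ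
  have step3 : ∫ p, G p = ∫ s, ∫ x, G (x, s) := by
    rw [show (volume : Measure (ℝ × ℝ)) = Measure.prod volume volume from Measure.volume_eq_prod ℝ ℝ]
    rw [show (volume : Measure (ℝ × ℝ)) = Measure.prod volume volume from Measure.volume_eq_prod ℝ ℝ] at hGint
    exact integral_prod_symm G hGint
  have inner_eval : ∀ s : ℝ, (∫ x, G (x, s)) =
      (Set.Ioi (0:ℝ)).indicator (fun s => β * s ^ (a+b+1) * Hker t s) s := by
    intro s
    have hGx : (fun x => G (x, s)) =
        (Set.Ioo (0:ℝ) s).indicator (fun x => x ^ a * (s - x) ^ b * Hker t s) := by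
      funext x
      rw [hG]
      by_cases hx : x ∈ Set.Ioo (0:ℝ) s
      · rw [Set.indicator_of_mem hx,
          Set.indicator_of_mem (show (x, s) ∈ S from ⟨hx.1, hx.2⟩)]
      · rw [Set.indicator_of_notMem hx,
          Set.indicator_of_notMem (fun h => hx ⟨h.1, h.2⟩)]
    rw [hGx, integral_indicator measurableSet_Ioo]
    by_cases hs : 0 < s
    · rw [Set.indicator_of_mem (Set.mem_Ioi.mpr hs)]
      have : ∫ x in Set.Ioo (0:ℝ) s, x ^ a * (s - x) ^ b * Hker t s
          = (∫ x in Set.Ioo (0:ℝ) s, x ^ a * (s - x) ^ b) * Hker t s :=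
        integral_mul_const _ _
      rw [this, beta_nat a b hs]
    · rw [Set.indicator_of_notMem (by simpa using hs)]
      rw [Set.Ioo_eq_empty (by simpa using le_of_not_gt hs : ¬ (0:ℝ) < s)]
      simp
  have step4 : ∫ s, ∫ x, G (x, s) = β * ∫ s in Set.Ioi (0:ℝ), s ^ (a+b+1) * Hker t s := by
    rw [show (fun s => ∫ x, G (x, s)) =
        (Set.Ioi (0:ℝ)).indicator (fun s => β * s ^ (a+b+1) * Hker t s) from
      funext inner_eval]
    rw [integral_indicator measurableSet_Ioi, ← integral_const_mul]
    exact setIntegral_congr_fun measurableSet_Ioi (fun s _ => by ring)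
  -- symmetry of Hker
  have hsymm : ∀ x : ℝ, Hker x t = Hker t x := by
    intro x
    unfold Hker
    rw [show x - t = -(t - x) from by ring, show x + t = t + x from by ring,
      neg_div, Real.cosh_neg]
  have hRHS : (∫ x in Set.Ioi (0 : ℝ), x ^ (2 * i + 2 * j + 3) * Hker x t)
      = ∫ s in Set.Ioi (0:ℝ), s ^ (a+b+1) * Hker t s := by
    rw [hn]
    exact setIntegral_congr_fun measurableSet_Ioi (fun x _ => by rw [hsymm])
  rw [step1, step2, step3, step4, hRHS, hβ, hn]
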